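/- Let φ : ℕ → (0,∞) with weak-ℓ¹ norm M = sup_{s>0} s·#{n : φ(n)>s} < ∞, let ν({n}) = φ(n)², and let 1 < p < 2. Suppose T : L¹(Ω) + L²(Ω) → (sequences on ℕ) is a sublinear map satisfying the weak-type bounds: ν({n : |Tf(n)| > y}) ≤ 2 M ‖f‖₁ / y for all y > 0 and all f ∈ L¹, and ∑_n |Tf(n)|² φ(n)² ≤ ‖f‖₂² for all f ∈ L². Then there is a constant C = C(p) such that (∑_n |Tf(n)|^p φ(n)²)^{1/p} ≤ C M^{(2-p)/p} ‖f‖_p for all f ∈ L^p(Ω). -/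

import Mathlib

open MeasureTheory Set
open scoped ENNReal

lemma aux_int1 {p : ℝ} (hp1 : 1 < p) (hp2 : p < 2) {r : ℝ} (hr : 0 ≤ r) :
    ∫⁻ t in Ioi (0:ℝ), (if t < r then ENNReal.ofReal (t ^ (p-2)) else 0)
      = ENNReal.ofReal (r ^ (p-1) / (p-1)) := by
  have h1 : (-1:ℝ) < p - 2 := by linarith
  have : ∀ t : ℝ, (if t < r then ENNReal.ofReal (t ^ (p-2)) else 0)
      = (Iio r).indicator (fun t => ENNReal.ofReal (t ^ (p-2))) t := by
    intro t; simp [Set.indicator_apply]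
  simp_rw [this]
  rw [lintegral_indicator measurableSet_Iio, Measure.restrict_restrict measurableSet_Iio]
  have hIoo : Iio r ∩ Ioi (0:ℝ) = Ioo 0 r := by ext t; simp [mem_Ioo, and_comm]
  rw [hIoo]
  have hint : IntegrableOn (fun t : ℝ => t ^ (p-2)) (Ioo 0 r) volume := by
    have := (intervalIntegral.intervalIntegrable_rpow' (a := 0) (b := r) h1).1
    exact this.mono_set Ioo_subset_Ioc_self
  rw [← ofReal_integral_eq_lintegral_ofReal hint]
  · congr 1
    have : ∫ t in Ioo 0 r, t ^ (p-2) = ∫ t in (0:ℝ)..r, t ^ (p-2) := by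
      rw [intervalIntegral.integral_of_le hr, ← integral_Ioc_eq_integral_Ioo]
    rw [this, integral_rpow (Or.inl h1)]
    have : p - 2 + 1 = p - 1 := by ring
    rw [this, Real.zero_rpow (by linarith : p - 1 ≠ 0), sub_zero]
  · filter_upwards [self_mem_ae_restrict (measurableSet_Ioo : MeasurableSet (Ioo (0:ℝ) r))]
      with t ht
    exact Real.rpow_nonneg ht.1.le _

lemma aux_int2 {p : ℝ} (hp1 : 1 < p) (hp2 : p < 2) {r : ℝ} (hr : 0 < r) :
    ∫⁻ t in Ioi (0:ℝ), (if r ≤ t then ENNReal.ofReal (t ^ (p-3)) else 0)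
      = ENNReal.ofReal (r ^ (p-2) / (2-p)) := by
  have h1 : p - 3 < -1 := by linarith
  have : ∀ t : ℝ, (if r ≤ t then ENNReal.ofReal (t ^ (p-3)) else 0)
      = (Ici r).indicator (fun t => ENNReal.ofReal (t ^ (p-3))) t := by
    intro t; simp [Set.indicator_apply]
  simp_rw [this]
  rw [lintegral_indicator measurableSet_Ici, Measure.restrict_restrict measurableSet_Ici]
  have hIci : Ici r ∩ Ioi (0:ℝ) = Ici r := by
    apply inter_eq_left.2; intro t ht; exact lt_of_lt_of_le hr ht
  rw [hIci]
  have hrst : (volume : Measure ℝ).restrict (Ici r) = volume.restrict (Ioi r) :=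
    Measure.restrict_congr_set Ioi_ae_eq_Ici.symm
  rw [hrst]
  have hint : IntegrableOn (fun t : ℝ => t ^ (p-3)) (Ioi r) volume :=
    integrableOn_Ioi_rpow_of_lt h1 hr
  rw [← ofReal_integral_eq_lintegral_ofReal hint]
  · congr 1
    rw [integral_Ioi_rpow_of_lt h1 hr]
    have h2 : p - 3 + 1 = p - 2 := by ring
    rw [h2]
    rw [div_eq_div_iff (by linarith) (by linarith)]
    ring
  · filter_upwards [self_mem_ae_restrict (measurableSet_Ioi : MeasurableSet (Ioi r))]
      with t ht
    exact Real.rpow_nonneg (hr.le.trans ht.le) _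

lemma nu_apply (w : ℕ → ℝ≥0∞) (S : Set ℕ) :
    (Measure.count.withDensity w) S = ∑' n, S.indicator w n := by
  rw [withDensity_apply _ (MeasurableSet.of_discrete),
    ← lintegral_indicator MeasurableSet.of_discrete, lintegral_count]

lemma nu_lintegral (w : ℕ → ℝ≥0∞) (g : ℕ → ℝ≥0∞) :
    ∫⁻ n, g n ∂(Measure.count.withDensity w) = ∑' n, g n * w n := by
  rw [lintegral_withDensity_eq_lintegral_mul _ (measurable_of_countable w)
    (measurable_of_countable g), lintegral_count]
  exact tsum_congr fun n => mul_comm _ _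

theorem marcinkiewicz_paley {Ω : Type*} [MeasurableSpace Ω] (μ : Measure Ω)
    [SigmaFinite μ] (φ : ℕ → ℝ) (hφ : ∀ n, 0 < φ n) (M : ℝ) (hMpos : 0 < M)
    (hfin : ∀ s : ℝ, 0 < s → {n : ℕ | s < φ n}.Finite)
    (hM : ∀ s : ℝ, 0 < s → s * ({n : ℕ | s < φ n}.ncard : ℝ) ≤ M)
    (p : ℝ) (hp1 : 1 < p) (hp2 : p < 2)
    (T : (Ω → ℂ) → ℕ → ℂ)
    (hsub : ∀ f g : Ω → ℂ, ∀ n, ‖T (f + g) n‖ ≤ ‖T f n‖ + ‖T g n‖)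
    (hhom : ∀ (c : ℂ) (f : Ω → ℂ) (n : ℕ), ‖T (c • f) n‖ = ‖c‖ * ‖T f n‖)
    (hweak11 : ∀ f : Ω → ℂ, MemLp f 1 μ → ∀ y : ℝ, 0 < y →
      (∑' n : ℕ, if y < ‖T f n‖ then ENNReal.ofReal (φ n ^ 2) else 0)
        ≤ ENNReal.ofReal (2 * M) * eLpNorm f 1 μ / ENNReal.ofReal y)
    (hstrong22 : ∀ f : Ω → ℂ, MemLp f 2 μ →
      (∑' n : ℕ, ENNReal.ofReal (‖T f n‖ ^ 2 * φ n ^ 2)) ≤ (eLpNorm f 2 μ) ^ 2) :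
    ∃ C : ℝ, 0 < C ∧ ∀ f : Ω → ℂ, MemLp f (ENNReal.ofReal p) μ →
      (∑' n : ℕ, ENNReal.ofReal (‖T f n‖ ^ p * φ n ^ 2)) ^ (1 / p)
        ≤ ENNReal.ofReal (C * M ^ ((2 - p) / p)) * eLpNorm f (ENNReal.ofReal p) μ := by
  classical
  have hp0 : (0:ℝ) < p := by linarith
  have hp1' : (0:ℝ) < p - 1 := by linarith
  have hp2' : (0:ℝ) < 2 - p := by linarith
  set K : ℝ := p * (4 / (p-1) + 4 / (2-p)) with hKdef
  have hKpos : 0 < K := by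
    apply mul_pos hp0; positivity
  refine ⟨K ^ (1/p), Real.rpow_pos_of_pos hKpos _, ?_⟩
  intro f hf
  obtain ⟨g, hg, hfg⟩ := hf.1
  set w : ℕ → ℝ≥0∞ := fun n => ENNReal.ofReal (φ n ^ 2) with hwdef
  set ν : Measure ℕ := Measure.count.withDensity w with hνdef
  set I : ℝ≥0∞ := ∫⁻ x, ENNReal.ofReal (‖g x‖ ^ p) ∂μ with hIdef
  -- I equals the f-version and is finite
  have hIf : ∫⁻ x, ENNReal.ofReal (‖f x‖ ^ p) ∂μ = I := by
    apply lintegral_congr_ae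
    filter_upwards [hfg] with x hx
    rw [hx]
  have hsnorm : eLpNorm f (ENNReal.ofReal p) μ = I ^ (1/p) := by
    rw [eLpNorm_eq_lintegral_rpow_enorm_toReal (by simp [ENNReal.ofReal_eq_zero]; linarith)
      ENNReal.ofReal_ne_top, ENNReal.toReal_ofReal hp0.le, ← hIf]
    congr 1
    apply lintegral_congr_ae
    filter_upwards [] with x
    rw [← ofReal_norm, ENNReal.ofReal_rpow_of_nonneg (norm_nonneg _) hp0.le]
  have hIlt : I < ∞ := by
    have h2 := hf.2
    rw [hsnorm] at h2
    have : I = (I ^ (1/p)) ^ p := by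
      rw [← ENNReal.rpow_mul, one_div, inv_mul_cancel₀ hp0.ne', ENNReal.rpow_one]
    rw [this]
    exact ENNReal.rpow_lt_top_of_nonneg hp0.le h2.ne
  -- the product-measurable integrands
  set F₁ : ℝ → Ω → ℝ≥0∞ := fun t x => if M*t < ‖g x‖ then ENNReal.ofReal ‖g x‖ else 0
    with hF₁def
  set F₂ : ℝ → Ω → ℝ≥0∞ := fun t x => if M*t < ‖g x‖ then 0 else ENNReal.ofReal (‖g x‖^2)
    with hF₂def
  have hmg : Measurable fun x => ‖g x‖ := hg.norm.measurable
  have hSmeas : MeasurableSet {q : ℝ × Ω | M * q.1 < ‖g q.2‖} :=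
    measurableSet_lt (measurable_const.mul measurable_fst) (hmg.comp measurable_snd)
  have hF₁meas : Measurable (Function.uncurry F₁) := by
    have : Function.uncurry F₁ = fun q : ℝ × Ω =>
        {q : ℝ × Ω | M * q.1 < ‖g q.2‖}.indicator
          (fun q => ENNReal.ofReal ‖g q.2‖) q := by
      ext q; simp [Function.uncurry, hF₁def, Set.indicator_apply]
    rw [this]
    exact ((hmg.comp measurable_snd).ennreal_ofReal).indicator hSmeas
  have hF₂meas : Measurable (Function.uncurry F₂) := by
    have : Function.uncurry F₂ = fun q : ℝ × Ω =>
        {q : ℝ × Ω | M * q.1 < ‖g q.2‖}ᶜ.indicator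
          (fun q => ENNReal.ofReal (‖g q.2‖^2)) q := by
      ext q
      simp only [Function.uncurry, hF₂def, Set.indicator_apply, Set.mem_compl_iff,
        Set.mem_setOf_eq]
      by_cases h : M * q.1 < ‖g q.2‖ <;>
        simp only [h, if_true, if_false, not_true_eq_false, not_false_eq_true]
    rw [this]
    exact (((hmg.comp measurable_snd).pow_const 2).ennreal_ofReal).indicator hSmeas.compl
  set L₁ : ℝ → ℝ≥0∞ := fun t => ∫⁻ x, F₁ t x ∂μ with hL₁def
  set L₂ : ℝ → ℝ≥0∞ := fun t => ∫⁻ x, F₂ t x ∂μ with hL₂def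
  have hL₁meas : Measurable L₁ := hF₁meas.lintegral_prod_right
  have hL₂meas : Measurable L₂ := hF₂meas.lintegral_prod_right
  -- the key distribution bound
  have key : ∀ t : ℝ, 0 < t →
      ν {n | t < ‖T f n‖} * ENNReal.ofReal (t^(p-1))
        ≤ ENNReal.ofReal (4*M) * (L₁ t * ENNReal.ofReal (t^(p-2)))
          + 4 * (L₂ t * ENNReal.ofReal (t^(p-3))) := by
    intro t ht
    set f₁ : Ω → ℂ := fun x => if M*t < ‖f x‖ then f x else 0 with hf₁def
    set f₂ : Ω → ℂ := fun x => if M*t < ‖f x‖ then 0 else f x with hf₂def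
    have hMt : 0 < M * t := mul_pos hMpos ht
    have hsplit : f = f₁ + f₂ := by
      funext x
      simp only [hf₁def, hf₂def, Pi.add_apply]
      split_ifs with h
      · rw [add_zero]
      · rw [zero_add]
    -- f₁ is in L¹
    have hf₁ae : f₁ =ᵐ[μ] (fun x => if M*t < ‖g x‖ then g x else 0) := by
      filter_upwards [hfg] with x hx
      simp only [hf₁def, hx]
    have hg₁sm : StronglyMeasurable (fun x => if M*t < ‖g x‖ then g x else 0) :=
      StronglyMeasurable.ite (measurableSet_lt measurable_const hmg) hg
        stronglyMeasurable_const
    have hptwise1 : ∀ x, (‖f₁ x‖₊ : ℝ≥0∞)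
        ≤ ENNReal.ofReal ((M*t)^(1-p)) * ENNReal.ofReal (‖f x‖^p) := by
      intro x
      rw [← enorm_eq_nnnorm, ← ofReal_norm]
      by_cases h : M*t < ‖f x‖
      · simp only [hf₁def, if_pos h]
        rw [← ENNReal.ofReal_mul (Real.rpow_nonneg hMt.le _)]
        apply ENNReal.ofReal_le_ofReal
        have hfx : 0 < ‖f x‖ := hMt.trans h
        calc ‖f x‖ = ‖f x‖^(1-p) * ‖f x‖^p := by
              rw [← Real.rpow_add hfx]; norm_num
          _ ≤ (M*t)^(1-p) * ‖f x‖^p := by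
              apply mul_le_mul_of_nonneg_right _ (Real.rpow_nonneg (norm_nonneg _) _)
              exact Real.rpow_le_rpow_of_nonpos hMt h.le (by linarith)
      · simp only [hf₁def, if_neg h, norm_zero, ENNReal.ofReal_zero]
        exact zero_le
    have hmem1 : MemLp f₁ 1 μ := by
      refine ⟨⟨_, hg₁sm, hf₁ae⟩, ?_⟩
      rw [eLpNorm_one_eq_lintegral_enorm]
      calc ∫⁻ x, (‖f₁ x‖₊ : ℝ≥0∞) ∂μ
          ≤ ∫⁻ x, ENNReal.ofReal ((M*t)^(1-p)) * ENNReal.ofReal (‖f x‖^p) ∂μ :=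
            lintegral_mono hptwise1
        _ = ENNReal.ofReal ((M*t)^(1-p)) * ∫⁻ x, ENNReal.ofReal (‖f x‖^p) ∂μ :=
            lintegral_const_mul' _ _ ENNReal.ofReal_ne_top
        _ < ⊤ := ENNReal.mul_lt_top ENNReal.ofReal_lt_top (hIf ▸ hIlt)
    have heq1 : eLpNorm f₁ 1 μ = L₁ t := by
      rw [eLpNorm_one_eq_lintegral_enorm, hL₁def]
      apply lintegral_congr_ae
      filter_upwards [hfg] with x hx
      rw [← ofReal_norm]
      simp only [hf₁def, hF₁def, hx]
      split_ifs with h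
      · rfl
      · rw [norm_zero, ENNReal.ofReal_zero]
    -- f₂ is in L²
    have hf₂ae : f₂ =ᵐ[μ] (fun x => if M*t < ‖g x‖ then 0 else g x) := by
      filter_upwards [hfg] with x hx
      simp only [hf₂def, hx]
    have hg₂sm : StronglyMeasurable (fun x => if M*t < ‖g x‖ then 0 else g x) :=
      StronglyMeasurable.ite (measurableSet_lt measurable_const hmg)
        stronglyMeasurable_const hg
    have hptwise2 : ∀ x, (‖f₂ x‖₊ : ℝ≥0∞)^(2:ℝ)
        ≤ ENNReal.ofReal ((M*t)^(2-p)) * ENNReal.ofReal (‖f x‖^p) := by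
      intro x
      rw [← enorm_eq_nnnorm, ← ofReal_norm,
        ENNReal.ofReal_rpow_of_nonneg (norm_nonneg _) (by norm_num : (0:ℝ) ≤ 2)]
      by_cases h : M*t < ‖f x‖
      · simp only [hf₂def, if_pos h, norm_zero,
          Real.zero_rpow (two_ne_zero (α := ℝ)), ENNReal.ofReal_zero]
        exact zero_le
      · simp only [hf₂def, if_neg h]
        push_neg at h
        rw [← ENNReal.ofReal_mul (Real.rpow_nonneg hMt.le _)]
        apply ENNReal.ofReal_le_ofReal
        calc ‖f x‖^(2:ℝ) = ‖f x‖^(2-p) * ‖f x‖^p := by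
              rw [← Real.rpow_add' (norm_nonneg _) (by norm_num)]
              norm_num
          _ ≤ (M*t)^(2-p) * ‖f x‖^p :=
              mul_le_mul_of_nonneg_right
                (Real.rpow_le_rpow (norm_nonneg _) h (by linarith))
                (Real.rpow_nonneg (norm_nonneg _) _)
    have hmem2 : MemLp f₂ 2 μ := by
      refine ⟨⟨_, hg₂sm, hf₂ae⟩, ?_⟩
      rw [eLpNorm_eq_lintegral_rpow_enorm_toReal two_ne_zero ENNReal.ofNat_ne_top]
      have h2t : ((2:ℝ≥0∞)).toReal = (2:ℝ) := by norm_num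
      rw [h2t]
      apply ENNReal.rpow_lt_top_of_nonneg (by norm_num)
      apply ne_of_lt
      calc ∫⁻ x, (‖f₂ x‖₊ : ℝ≥0∞)^(2:ℝ) ∂μ
          ≤ ∫⁻ x, ENNReal.ofReal ((M*t)^(2-p)) * ENNReal.ofReal (‖f x‖^p) ∂μ :=
            lintegral_mono hptwise2
        _ = ENNReal.ofReal ((M*t)^(2-p)) * ∫⁻ x, ENNReal.ofReal (‖f x‖^p) ∂μ :=
            lintegral_const_mul' _ _ ENNReal.ofReal_ne_top
        _ < ⊤ := ENNReal.mul_lt_top ENNReal.ofReal_lt_top (hIf ▸ hIlt)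
    have heq2 : (eLpNorm f₂ 2 μ)^2 = L₂ t := by
      have hh : ∫⁻ x, ((‖f₂ x‖₊ : ℝ≥0∞))^(2:ℝ) ∂μ = L₂ t := by
        rw [hL₂def]
        apply lintegral_congr_ae
        filter_upwards [hfg] with x hx
        rw [← enorm_eq_nnnorm, ← ofReal_norm,
          ENNReal.ofReal_rpow_of_nonneg (norm_nonneg _) (by norm_num : (0:ℝ) ≤ 2)]
        simp only [hf₂def, hF₂def, hx]
        split_ifs with h
        · rw [norm_zero, Real.zero_rpow (two_ne_zero (α := ℝ)), ENNReal.ofReal_zero]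
        · rw [Real.rpow_two]
      rw [eLpNorm_eq_lintegral_rpow_enorm_toReal two_ne_zero ENNReal.ofNat_ne_top]
      have h2t : ((2:ℝ≥0∞)).toReal = (2:ℝ) := by norm_num
      rw [h2t]; simp only [enorm_eq_nnnorm]; rw [hh, ← ENNReal.rpow_natCast _ 2, ← ENNReal.rpow_mul]
      norm_num
    -- weak (1,1) bound for f₁
    have hw1 := hweak11 f₁ hmem1 (t/2) (by linarith)
    have hν1 : ν {n | t/2 < ‖T f₁ n‖}
        = ∑' n, if t/2 < ‖T f₁ n‖ then ENNReal.ofReal (φ n^2) else 0 := by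
      rw [hνdef, nu_apply]
      exact tsum_congr fun n => by simp [Set.indicator_apply, hwdef]
    have hA : ν {n | t/2 < ‖T f₁ n‖}
        ≤ ENNReal.ofReal (2*M) * L₁ t / ENNReal.ofReal (t/2) := by
      rw [hν1, ← heq1]; exact hw1
    -- Chebyshev for f₂
    have hs2 := hstrong22 f₂ hmem2
    have hB : ν {n | t/2 < ‖T f₂ n‖}
        ≤ (ENNReal.ofReal ((t/2)^2))⁻¹ * L₂ t := by
      have hcheb : ν {n | t/2 < ‖T f₂ n‖}
          ≤ (ENNReal.ofReal ((t/2)^2))⁻¹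
            * ∑' n, ENNReal.ofReal (‖T f₂ n‖^2 * φ n^2) := by
        rw [hνdef, nu_apply, ← ENNReal.tsum_mul_left]
        apply Summable.tsum_le_tsum _ ENNReal.summable ENNReal.summable
        intro n
        by_cases h : t/2 < ‖T f₂ n‖
        · have hmem : n ∈ {n | t/2 < ‖T f₂ n‖} := h
          rw [Set.indicator_of_mem hmem]
          have hc0 : ENNReal.ofReal ((t/2)^2) ≠ 0 := by
            rw [Ne, ENNReal.ofReal_eq_zero, not_le]
            positivity
          calc w n
              = (ENNReal.ofReal ((t/2)^2))⁻¹ * (ENNReal.ofReal ((t/2)^2) * w n) := by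
                rw [← mul_assoc, ENNReal.inv_mul_cancel hc0 ENNReal.ofReal_ne_top,
                  one_mul]
            _ ≤ _ := by
                apply mul_le_mul_right
                rw [hwdef, ← ENNReal.ofReal_mul (by positivity)]
                apply ENNReal.ofReal_le_ofReal
                have h2 : (t/2)^2 ≤ ‖T f₂ n‖^2 := by
                  have := norm_nonneg (T f₂ n); nlinarith
                nlinarith [sq_nonneg (φ n)]
        · have hmem : n ∉ {n | t/2 < ‖T f₂ n‖} := h
          rw [Set.indicator_of_notMem hmem]; exact zero_le
      exact hcheb.trans (mul_le_mul_right (hs2.trans heq2.le) _)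
    -- combine
    have hTsplit : ∀ n, ‖T f n‖ ≤ ‖T f₁ n‖ + ‖T f₂ n‖ := by
      intro n
      have hTf : T f = T (f₁ + f₂) := by rw [← hsplit]
      rw [hTf]; exact hsub f₁ f₂ n
    have hsubset : {n | t < ‖T f n‖}
        ⊆ {n | t/2 < ‖T f₁ n‖} ∪ {n | t/2 < ‖T f₂ n‖} := by
      intro n hn
      by_cases h1 : t/2 < ‖T f₁ n‖
      · exact Or.inl h1
      · right
        simp only [Set.mem_setOf_eq] at *
        push_neg at h1
        have := hTsplit n
        linarith
    have hD : ν {n | t < ‖T f n‖}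
        ≤ ENNReal.ofReal (2*M) * L₁ t / ENNReal.ofReal (t/2)
          + (ENNReal.ofReal ((t/2)^2))⁻¹ * L₂ t :=
      (measure_mono hsubset).trans ((measure_union_le _ _).trans (add_le_add hA hB))
    -- multiply by t^(p-1) and rearrange
    have hAc : ENNReal.ofReal (2*M) * L₁ t / ENNReal.ofReal (t/2)
          * ENNReal.ofReal (t^(p-1))
        = ENNReal.ofReal (4*M) * (L₁ t * ENNReal.ofReal (t^(p-2))) := by
      rw [div_eq_mul_inv, ← ENNReal.ofReal_inv_of_pos (half_pos ht)]
      have e1 : ENNReal.ofReal (2*M) * ENNReal.ofReal ((t/2)⁻¹)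
            * ENNReal.ofReal (t^(p-1))
          = ENNReal.ofReal (4*M) * ENNReal.ofReal (t^(p-2)) := by
        rw [← ENNReal.ofReal_mul (by positivity), ← ENNReal.ofReal_mul (by positivity),
          ← ENNReal.ofReal_mul (by positivity)]
        congr 1
        have ht1 : t^(p-1) = t^(p-2) * t := by
          rw [show p-1 = (p-2)+1 by ring, Real.rpow_add ht, Real.rpow_one]
        rw [ht1]
        field_simp
        ring
      calc ENNReal.ofReal (2*M) * L₁ t * ENNReal.ofReal ((t/2)⁻¹)
            * ENNReal.ofReal (t^(p-1))
          = L₁ t * (ENNReal.ofReal (2*M) * ENNReal.ofReal ((t/2)⁻¹)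
              * ENNReal.ofReal (t^(p-1))) := by
            ring
        _ = L₁ t * (ENNReal.ofReal (4*M) * ENNReal.ofReal (t^(p-2))) := by rw [e1]
        _ = ENNReal.ofReal (4*M) * (L₁ t * ENNReal.ofReal (t^(p-2))) := by ring
    have hBc : (ENNReal.ofReal ((t/2)^2))⁻¹ * L₂ t * ENNReal.ofReal (t^(p-1))
        = 4 * (L₂ t * ENNReal.ofReal (t^(p-3))) := by
      rw [← ENNReal.ofReal_inv_of_pos (by positivity)]
      have e2 : ENNReal.ofReal (((t/2)^2)⁻¹) * ENNReal.ofReal (t^(p-1))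
          = ENNReal.ofReal 4 * ENNReal.ofReal (t^(p-3)) := by
        rw [← ENNReal.ofReal_mul (by positivity), ← ENNReal.ofReal_mul (by norm_num)]
        congr 1
        have ht2 : t^(p-1) = t^(p-3) * t^(2:ℝ) := by
          rw [show p-1 = (p-3)+2 by ring, Real.rpow_add ht]
        have ht3 : t^(2:ℝ) = t * t := by
          rw [show (2:ℝ) = 1+1 by norm_num, Real.rpow_add ht, Real.rpow_one]
        rw [ht2, ht3]
        field_simp
        ring
      have h4 : (4:ℝ≥0∞) = ENNReal.ofReal 4 := by norm_num
      calc ENNReal.ofReal (((t/2)^2)⁻¹) * L₂ t * ENNReal.ofReal (t^(p-1))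
          = L₂ t * (ENNReal.ofReal (((t/2)^2)⁻¹) * ENNReal.ofReal (t^(p-1))) := by ring
        _ = L₂ t * (ENNReal.ofReal 4 * ENNReal.ofReal (t^(p-3))) := by rw [e2]
        _ = 4 * (L₂ t * ENNReal.ofReal (t^(p-3))) := by rw [h4]; ring
    calc ν {n | t < ‖T f n‖} * ENNReal.ofReal (t^(p-1))
        ≤ (ENNReal.ofReal (2*M) * L₁ t / ENNReal.ofReal (t/2)
            + (ENNReal.ofReal ((t/2)^2))⁻¹ * L₂ t) * ENNReal.ofReal (t^(p-1)) :=
          mul_le_mul_left hD _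
      _ = ENNReal.ofReal (2*M) * L₁ t / ENNReal.ofReal (t/2) * ENNReal.ofReal (t^(p-1))
          + (ENNReal.ofReal ((t/2)^2))⁻¹ * L₂ t * ENNReal.ofReal (t^(p-1)) := by
          rw [add_mul]
      _ = _ := by rw [hAc, hBc]
  -- Tonelli computations
  have hrp2 : Measurable fun t : ℝ => ENNReal.ofReal (t^(p-2)) :=
    (measurable_id.pow measurable_const).ennreal_ofReal
  have hrp3 : Measurable fun t : ℝ => ENNReal.ofReal (t^(p-3)) :=
    (measurable_id.pow measurable_const).ennreal_ofReal
  have J₁ : ∫⁻ t in Ioi (0:ℝ), L₁ t * ENNReal.ofReal (t^(p-2))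
      = ENNReal.ofReal (M^(1-p) / (p-1)) * I := by
    have h1 : ∀ t : ℝ, L₁ t * ENNReal.ofReal (t^(p-2))
        = ∫⁻ x, F₁ t x * ENNReal.ofReal (t^(p-2)) ∂μ := fun t =>
      (lintegral_mul_const' _ _ ENNReal.ofReal_ne_top).symm
    simp_rw [h1]
    rw [lintegral_lintegral_swap
      (by exact (hF₁meas.mul (hrp2.comp measurable_fst)).aemeasurable)]
    have hinner : ∀ x, (∫⁻ t in Ioi (0:ℝ), F₁ t x * ENNReal.ofReal (t^(p-2)))
        = ENNReal.ofReal (‖g x‖^p) * ENNReal.ofReal (M^(1-p)/(p-1)) := by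
      intro x
      have hcond : ∀ t : ℝ, F₁ t x * ENNReal.ofReal (t^(p-2))
          = ENNReal.ofReal ‖g x‖
            * (if t < ‖g x‖/M then ENNReal.ofReal (t^(p-2)) else 0) := by
        intro t
        simp only [hF₁def]
        by_cases h : M*t < ‖g x‖
        · rw [if_pos h, if_pos (by rw [lt_div_iff₀ hMpos]; linarith)]
        · rw [if_neg h, if_neg (by rw [lt_div_iff₀ hMpos, not_lt]; linarith), zero_mul,
            mul_zero]
      simp_rw [hcond]
      rw [lintegral_const_mul' _ _ ENNReal.ofReal_ne_top,
        aux_int1 hp1 hp2 (by positivity : (0:ℝ) ≤ ‖g x‖/M),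
        ← ENNReal.ofReal_mul (norm_nonneg _),
        ← ENNReal.ofReal_mul (Real.rpow_nonneg (norm_nonneg _) _)]
      congr 1
      rw [Real.div_rpow (norm_nonneg _) hMpos.le]
      rcases eq_or_lt_of_le (norm_nonneg (g x)) with h0 | h0
      · rw [← h0, Real.zero_rpow (by linarith : p ≠ 0)]
        ring
      · have ha : ‖g x‖ * ‖g x‖^(p-1) = ‖g x‖^p := by
          nth_rewrite 1 [← Real.rpow_one ‖g x‖]
          rw [← Real.rpow_add h0]; norm_num
        have hb : M^((1:ℝ)-p) = (M^(p-1))⁻¹ := by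
          rw [show (1:ℝ)-p = -(p-1) by ring, Real.rpow_neg hMpos.le]
        rw [hb, ← ha]
        ring
    calc ∫⁻ x, (∫⁻ t in Ioi (0:ℝ), F₁ t x * ENNReal.ofReal (t^(p-2))) ∂μ
        = ∫⁻ x, ENNReal.ofReal (‖g x‖^p) * ENNReal.ofReal (M^(1-p)/(p-1)) ∂μ :=
          lintegral_congr hinner
      _ = ENNReal.ofReal (M^(1-p) / (p-1)) * I := by
          rw [lintegral_mul_const' _ _ ENNReal.ofReal_ne_top, hIdef, mul_comm]
  have J₂ : ∫⁻ t in Ioi (0:ℝ), L₂ t * ENNReal.ofReal (t^(p-3))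
      = ENNReal.ofReal (M^(2-p) / (2-p)) * I := by
    have h1 : ∀ t : ℝ, L₂ t * ENNReal.ofReal (t^(p-3))
        = ∫⁻ x, F₂ t x * ENNReal.ofReal (t^(p-3)) ∂μ := fun t =>
      (lintegral_mul_const' _ _ ENNReal.ofReal_ne_top).symm
    simp_rw [h1]
    rw [lintegral_lintegral_swap
      (by exact (hF₂meas.mul (hrp3.comp measurable_fst)).aemeasurable)]
    have hinner : ∀ x, (∫⁻ t in Ioi (0:ℝ), F₂ t x * ENNReal.ofReal (t^(p-3)))
        = ENNReal.ofReal (‖g x‖^p) * ENNReal.ofReal (M^(2-p)/(2-p)) := by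
      intro x
      rcases eq_or_lt_of_le (norm_nonneg (g x)) with h0 | h0
      · have hz : ∀ t : ℝ, F₂ t x * ENNReal.ofReal (t^(p-3)) = 0 := by
          intro t
          simp only [hF₂def, ← h0]
          split_ifs with h
          · rw [zero_mul]
          · norm_num
        simp_rw [hz]
        rw [lintegral_zero, ← h0, Real.zero_rpow (by linarith : p ≠ 0),
          ENNReal.ofReal_zero, zero_mul]
      · have hcond : ∀ᵐ t ∂(volume.restrict (Ioi (0:ℝ))),
            F₂ t x * ENNReal.ofReal (t^(p-3))
            = ENNReal.ofReal (‖g x‖^2)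
              * (if ‖g x‖/M ≤ t then ENNReal.ofReal (t^(p-3)) else 0) := by
          filter_upwards [self_mem_ae_restrict measurableSet_Ioi] with t ht
          simp only [hF₂def]
          by_cases h : M*t < ‖g x‖
          · rw [if_pos h, if_neg (by rw [div_le_iff₀ hMpos, not_le]; linarith), zero_mul,
              mul_zero]
          · rw [if_neg h, if_pos (by rw [div_le_iff₀ hMpos]; linarith)]
        rw [lintegral_congr_ae hcond,
          lintegral_const_mul' _ _ ENNReal.ofReal_ne_top,
          aux_int2 hp1 hp2 (div_pos h0 hMpos),
          ← ENNReal.ofReal_mul (by positivity),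
          ← ENNReal.ofReal_mul (Real.rpow_nonneg (norm_nonneg _) _)]
        congr 1
        rw [Real.div_rpow (norm_nonneg _) hMpos.le]
        have ha : ‖g x‖^2 * ‖g x‖^(p-2) = ‖g x‖^p := by
          rw [← Real.rpow_two, ← Real.rpow_add h0]; norm_num
        have hb : M^((2:ℝ)-p) = (M^(p-2))⁻¹ := by
          rw [show (2:ℝ)-p = -(p-2) by ring, Real.rpow_neg hMpos.le]
        rw [hb, ← ha]
        ring
    calc ∫⁻ x, (∫⁻ t in Ioi (0:ℝ), F₂ t x * ENNReal.ofReal (t^(p-3))) ∂μ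
        = ∫⁻ x, ENNReal.ofReal (‖g x‖^p) * ENNReal.ofReal (M^(2-p)/(2-p)) ∂μ :=
          lintegral_congr hinner
      _ = ENNReal.ofReal (M^(2-p) / (2-p)) * I := by
          rw [lintegral_mul_const' _ _ ENNReal.ofReal_ne_top, hIdef, mul_comm]
  -- layer cake on the sequence side
  have hlayer : (∑' n, ENNReal.ofReal (‖T f n‖^p * φ n^2))
      = ENNReal.ofReal p
        * ∫⁻ t in Ioi (0:ℝ), ν {n | t < ‖T f n‖} * ENNReal.ofReal (t^(p-1)) := by
    have h1 : (∑' n, ENNReal.ofReal (‖T f n‖^p * φ n^2))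
        = ∫⁻ n, ENNReal.ofReal (‖T f n‖^p) ∂ν := by
      rw [hνdef, nu_lintegral]
      refine tsum_congr fun n => ?_
      rw [hwdef, ← ENNReal.ofReal_mul (Real.rpow_nonneg (norm_nonneg _) _)]
    rw [h1]
    exact lintegral_rpow_eq_lintegral_meas_lt_mul ν (ae_of_all _ fun n => norm_nonneg _)
      (measurable_of_countable _).aemeasurable hp0
  -- combine everything
  have hmain : (∑' n, ENNReal.ofReal (‖T f n‖^p * φ n^2))
      ≤ ENNReal.ofReal (K * M^(2-p)) * I := by
    rw [hlayer]
    have step1 : ∫⁻ t in Ioi (0:ℝ), ν {n | t < ‖T f n‖} * ENNReal.ofReal (t^(p-1))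
        ≤ ∫⁻ t in Ioi (0:ℝ),
            (ENNReal.ofReal (4*M) * (L₁ t * ENNReal.ofReal (t^(p-2)))
              + 4 * (L₂ t * ENNReal.ofReal (t^(p-3)))) := by
      apply lintegral_mono_ae
      filter_upwards [self_mem_ae_restrict measurableSet_Ioi] with t ht
      exact key t ht
    have step2 : ∫⁻ t in Ioi (0:ℝ),
          (ENNReal.ofReal (4*M) * (L₁ t * ENNReal.ofReal (t^(p-2)))
            + 4 * (L₂ t * ENNReal.ofReal (t^(p-3))))
        = ENNReal.ofReal (4*M) * (ENNReal.ofReal (M^(1-p)/(p-1)) * I)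
            + 4 * (ENNReal.ofReal (M^(2-p)/(2-p)) * I) := by
      rw [lintegral_add_left (by exact measurable_const.mul (hL₁meas.mul hrp2)),
        lintegral_const_mul' _ _ ENNReal.ofReal_ne_top,
        lintegral_const_mul' _ _ (by norm_num : (4:ℝ≥0∞) ≠ ⊤), J₁, J₂]
    have step3 : ENNReal.ofReal p
          * (ENNReal.ofReal (4*M) * (ENNReal.ofReal (M^(1-p)/(p-1)) * I)
            + 4 * (ENNReal.ofReal (M^(2-p)/(2-p)) * I))
        = ENNReal.ofReal (K * M^(2-p)) * I := by
      have e1 : ENNReal.ofReal (4*M) * (ENNReal.ofReal (M^(1-p)/(p-1)) * I)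
          = ENNReal.ofReal (4*M*(M^(1-p)/(p-1))) * I := by
        rw [← mul_assoc, ← ENNReal.ofReal_mul (by positivity)]
      have e2 : (4:ℝ≥0∞) * (ENNReal.ofReal (M^(2-p)/(2-p)) * I)
          = ENNReal.ofReal (4*(M^(2-p)/(2-p))) * I := by
        rw [← mul_assoc, show (4:ℝ≥0∞) = ENNReal.ofReal 4 by norm_num,
          ← ENNReal.ofReal_mul (by norm_num)]
      rw [e1, e2, ← add_mul, ← ENNReal.ofReal_add (by positivity) (by positivity),
        ← mul_assoc, ← ENNReal.ofReal_mul hp0.le]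
      congr 2
      have hM2 : M * M^((1:ℝ)-p) = M^((2:ℝ)-p) := by
        nth_rewrite 1 [← Real.rpow_one M]
        rw [← Real.rpow_add hMpos]
        congr 1
        ring
      rw [show 4*M*(M^((1:ℝ)-p)/(p-1)) = 4*(M*M^((1:ℝ)-p))/(p-1) by ring, hM2, hKdef]
      field_simp
    calc ENNReal.ofReal p * ∫⁻ t in Ioi (0:ℝ), ν {n | t < ‖T f n‖} * ENNReal.ofReal (t^(p-1))
        ≤ ENNReal.ofReal p * ∫⁻ t in Ioi (0:ℝ),
            (ENNReal.ofReal (4*M) * (L₁ t * ENNReal.ofReal (t^(p-2)))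
              + 4 * (L₂ t * ENNReal.ofReal (t^(p-3)))) := mul_le_mul_right step1 _
      _ = ENNReal.ofReal p
          * (ENNReal.ofReal (4*M) * (ENNReal.ofReal (M^(1-p)/(p-1)) * I)
            + 4 * (ENNReal.ofReal (M^(2-p)/(2-p)) * I)) := by rw [step2]
      _ = ENNReal.ofReal (K * M^(2-p)) * I := step3
  -- final rpow step
  calc (∑' n, ENNReal.ofReal (‖T f n‖^p * φ n^2)) ^ (1/p)
      ≤ (ENNReal.ofReal (K * M^(2-p)) * I) ^ (1/p) :=
        ENNReal.rpow_le_rpow hmain (by positivity)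
    _ = ENNReal.ofReal (K^(1/p) * M^((2-p)/p)) * eLpNorm f (ENNReal.ofReal p) μ := by
        rw [ENNReal.mul_rpow_of_nonneg _ _ (by positivity),
          ENNReal.ofReal_rpow_of_nonneg (by positivity) (by positivity), hsnorm]
        congr 2
        rw [Real.mul_rpow hKpos.le (Real.rpow_nonneg hMpos.le _),
          ← Real.rpow_mul hMpos.le, mul_one_div]
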